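/- Let v be an odd integer with v ≥ 5, and suppose there exists a pairwise balanced design PBD(v,{5,7,9}) (index 1). Then there exists a trade-free threefold triple system TS_3(v); in particular, one with no repeated blocks. -/

import Mathlib

set_option maxRecDepth 100000
set_option maxHeartbeats 1600000

open Finset


/-- `IsPBD B lam K`: the indexed family of blocks `B` (a multiset of subsets of the
point set `V`, one block per index) is a pairwise balanced design `PBD_lam(|V|, K)`:
every block has size in `K`, and every pair of distinct points lies in exactly `lam`
blocks (counted with multiplicity). -/
def IsPBD {V : Type*} [DecidableEq V] {ι : Type*} [Fintype ι]
    (B : ι → Finset V) (lam : ℕ) (K : Set ℕ) : Prop :=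
  (∀ i, (B i).card ∈ K) ∧
  (∀ p : Finset V, p.card = 2 → (Finset.univ.filter (fun i => p ⊆ B i)).card = lam)

/-- The generalized incidence matrix `N₂`: rows indexed by 2-element subsets of the
point set, columns indexed by the blocks (with multiplicity); entry is 1 if the pair
is contained in the block, and 0 otherwise. -/
def N2 {V : Type*} [DecidableEq V] {ι : Type*} (F : Type*) [Zero F] [One F]
    (B : ι → Finset V) : Matrix {P : Finset V // P.card = 2} ι F :=
  Matrix.of fun P i => if (P : Finset V) ⊆ B i then 1 else 0

/-- A block system is trade-free if there do not exist two distinct sub-multisets of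
its multiset of blocks covering every 2-element subset of the point set the same
number of times (counted with multiplicity). -/
def TradeFree {V : Type*} [DecidableEq V] {ι : Type*} [Fintype ι]
    (B : ι → Finset V) : Prop :=
  ∀ A1 A2 : Multiset (Finset V),
    A1 ≤ Multiset.map B Finset.univ.val → A2 ≤ Multiset.map B Finset.univ.val →
    (∀ p : Finset V, p.card = 2 →
      Multiset.countP (fun e => p ⊆ e) A1 = Multiset.countP (fun e => p ⊆ e) A2) →
    A1 = A2


def T5 : Fin 10 → Finset (Fin 5) := ![{0,1,2}, {0,1,3}, {0,1,4}, {0,2,3}, {0,2,4}, {0,3,4}, {1,2,3}, {1,2,4}, {1,3,4}, {2,3,4}]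

def P5 : Fin 10 → Finset (Fin 5) := ![{0,1}, {0,2}, {0,3}, {0,4}, {1,2}, {1,3}, {1,4}, {2,3}, {2,4}, {3,4}]

def M5 : Fin 10 → Fin 10 → ZMod 5 := ![![2, 2, 4, 4, 2, 4, 4, 4, 4, 2], ![2, 4, 2, 4, 4, 2, 4, 4, 2, 4], ![2, 4, 4, 2, 4, 4, 2, 2, 4, 4], ![4, 2, 2, 4, 4, 4, 2, 2, 4, 4], ![4, 2, 4, 2, 4, 2, 4, 4, 2, 4], ![4, 4, 2, 2, 2, 4, 4, 4, 4, 2], ![4, 4, 4, 2, 2, 2, 4, 2, 4, 4], ![4, 4, 2, 4, 2, 4, 2, 4, 2, 4], ![4, 2, 4, 4, 4, 2, 2, 4, 4, 2], ![2, 4, 4, 4, 4, 4, 4, 2, 2, 2]]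

def T7 : Fin 21 → Finset (Fin 7) := ![{0,1,3}, {0,1,5}, {0,1,6}, {0,2,3}, {0,2,4}, {0,2,5}, {0,3,6}, {0,4,5}, {0,4,6}, {1,2,4}, {1,2,5}, {1,2,6}, {1,3,4}, {1,3,5}, {1,4,6}, {2,3,4}, {2,3,6}, {2,5,6}, {3,4,5}, {3,5,6}, {4,5,6}]

def P7 : Fin 21 → Finset (Fin 7) := ![{0,1}, {0,2}, {0,3}, {0,4}, {0,5}, {0,6}, {1,2}, {1,3}, {1,4}, {1,5}, {1,6}, {2,3}, {2,4}, {2,5}, {2,6}, {3,4}, {3,5}, {3,6}, {4,5}, {4,6}, {5,6}]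

def M7 : Fin 21 → Fin 21 → ZMod 5 := ![![1, 2, 0, 4, 3, 1, 4, 0, 2, 1, 3, 3, 4, 0, 3, 3, 4, 4, 3, 0, 2], ![0, 4, 4, 3, 0, 3, 3, 1, 4, 1, 2, 2, 3, 1, 0, 0, 3, 3, 2, 4, 4], ![0, 4, 1, 3, 2, 1, 3, 4, 4, 3, 0, 0, 3, 4, 2, 2, 3, 3, 0, 1, 4], ![3, 0, 0, 4, 3, 4, 4, 2, 0, 4, 3, 1, 1, 2, 3, 3, 4, 1, 3, 2, 0], ![4, 1, 3, 0, 1, 2, 2, 3, 3, 0, 4, 1, 0, 3, 4, 4, 2, 0, 4, 3, 3], ![3, 0, 2, 1, 1, 4, 4, 0, 2, 1, 3, 3, 4, 0, 3, 3, 4, 4, 3, 0, 2], ![1, 3, 1, 2, 4, 0, 2, 3, 3, 0, 4, 1, 0, 3, 4, 4, 2, 0, 4, 3, 3], ![2, 1, 4, 1, 0, 3, 3, 4, 4, 3, 0, 0, 3, 4, 2, 2, 3, 3, 0, 1, 4], ![4, 3, 3, 0, 4, 0, 0, 3, 3, 2, 1, 4, 2, 3, 4, 4, 0, 2, 1, 1,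 3], ![4, 3, 3, 2, 4, 0, 0, 3, 1, 2, 1, 4, 0, 3, 4, 1, 0, 2, 4, 3, 3], ![4, 3, 3, 0, 1, 2, 0, 3, 3, 0, 4, 4, 2, 1, 1, 4, 2, 0, 4, 3, 3], ![2, 4, 4, 3, 0, 3, 1, 4, 1, 3, 0, 2, 3, 1, 0, 0, 3, 3, 2, 4, 4], ![3, 0, 2, 4, 3, 4, 4, 0, 0, 4, 3, 3, 1, 2, 3, 1, 1, 4, 3, 2, 0], ![1, 3, 3, 2, 4, 0, 2, 1, 3, 0, 4, 4, 0, 3, 4, 1, 0, 2, 4, 3, 3], ![3, 2, 0, 4, 3, 1, 1, 2, 0, 4, 1, 3, 4, 0, 3, 3, 4, 4, 3, 0, 2], ![2, 1, 4, 3, 0, 3, 3, 4, 1, 3, 0, 0, 1, 4, 2, 0, 3, 3, 2, 4, 4], ![0, 4, 1, 3, 2, 3, 3, 4, 4, 3, 2, 0, 3, 4, 0, 2, 3, 1, 0, 4, 1], ![3, 2, 0, 4, 3, 4, 1, 2, 0, 4, 3, 3, 4, 0, 1, 3, 4, 1, 3, 2, 0], ![0, 4, 4, 3, 2, 3, 3,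 1, 4, 3, 2, 2, 3, 4, 0, 0, 1, 3, 0, 4, 1], ![4, 3, 3, 0, 4, 2, 0, 3, 3, 2, 4, 4, 2, 3, 1, 4, 0, 0, 1, 3, 1], ![3, 0, 2, 1, 3, 4, 4, 0, 2, 4, 3, 3, 4, 2, 3, 3, 1, 4, 1, 0, 0]]

def T9 : Fin 36 → Finset (Fin 9) := ![{0,1,2}, {0,1,7}, {0,1,8}, {0,2,5}, {0,2,6}, {0,3,4}, {0,3,6}, {0,3,7}, {0,4,5}, {0,4,6}, {0,5,8}, {0,7,8}, {1,2,3}, {1,2,8}, {1,3,5}, {1,3,7}, {1,4,5}, {1,4,6}, {1,4,7}, {1,5,6}, {1,6,8}, {2,3,5}, {2,3,8}, {2,4,6}, {2,4,7}, {2,4,8}, {2,5,7}, {2,6,7}, {3,4,7}, {3,4,8}, {3,5,6}, {3,6,8}, {4,5,8}, {5,6,7}, {5,7,8}, {6,7,8}]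

def P9 : Fin 36 → Finset (Fin 9) := ![{0,1}, {0,2}, {0,3}, {0,4}, {0,5}, {0,6}, {0,7}, {0,8}, {1,2}, {1,3}, {1,4}, {1,5}, {1,6}, {1,7}, {1,8}, {2,3}, {2,4}, {2,5}, {2,6}, {2,7}, {2,8}, {3,4}, {3,5}, {3,6}, {3,7}, {3,8}, {4,5}, {4,6}, {4,7}, {4,8}, {5,6}, {5,7}, {5,8}, {6,7}, {6,8}, {7,8}]

def M9 : Fin 36 → Fin 36 → ZMod 5 := ![![4, 3, 3, 1, 2, 3, 4, 0, 4, 0, 2, 1, 2, 2, 1, 1, 0, 0, 4, 4, 0, 1, 4, 4, 3, 4, 2, 1, 1, 0, 2, 1, 3, 2, 2, 1], ![0, 4, 0, 1, 2, 4, 0, 4, 1, 4, 3, 0, 2, 1, 1, 0, 3, 4, 2, 1, 3, 4, 1, 1, 0, 2, 2, 0, 1, 4, 3, 0, 4, 2, 2, 1], ![2, 3, 2, 3, 1, 3, 1, 1, 0, 1, 0, 4, 1, 2, 3, 4, 2, 1, 4, 0, 2, 0, 0, 0, 2, 4, 1, 4, 3, 1, 0, 4, 3, 1, 1, 3], ![0,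 1, 1, 2, 3, 4, 3, 0, 4, 2, 1, 4, 0, 2, 0, 4, 1, 2, 0, 2, 1, 2, 4, 0, 1, 0, 0, 4, 2, 3, 1, 1, 2, 3, 0, 2], ![1, 2, 1, 2, 0, 3, 3, 0, 2, 3, 2, 0, 3, 1, 4, 0, 4, 3, 1, 4, 4, 2, 2, 1, 1, 1, 3, 0, 2, 2, 2, 3, 0, 0, 3, 2], ![2, 2, 3, 4, 4, 1, 2, 2, 1, 4, 3, 0, 2, 1, 1, 0, 3, 4, 2, 1, 3, 4, 1, 1, 0, 2, 2, 0, 1, 4, 3, 0, 4, 2, 2, 1], ![0, 3, 4, 4, 3, 2, 0, 3, 2, 4, 3, 4, 3, 0, 2, 4, 1, 4, 0, 2, 1, 2, 2, 0, 1, 0, 3, 4, 2, 3, 3, 4, 4, 3, 0, 2], ![3, 0, 4, 2, 3, 2, 3, 0, 2, 2, 4, 1, 0, 4, 2, 1, 1, 2, 3, 2, 1, 4, 2, 4, 4, 3, 0, 1, 2, 3, 4, 1, 2, 0, 3, 2], ![4, 3, 2, 3, 4, 3, 1, 1, 3, 3, 2, 4, 4, 0, 0, 4, 2, 3, 4, 0,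 2, 0, 3, 0, 2, 4, 4, 4, 3, 1, 2, 2, 0, 1, 1, 3], ![4, 0, 0, 4, 2, 1, 2, 2, 1, 3, 0, 1, 4, 4, 4, 1, 0, 3, 4, 4, 0, 1, 1, 4, 3, 4, 4, 1, 1, 0, 0, 3, 1, 2, 2, 1], ![1, 1, 2, 0, 4, 3, 1, 4, 3, 0, 2, 2, 1, 3, 0, 2, 2, 0, 1, 3, 2, 3, 3, 0, 2, 1, 1, 2, 0, 1, 2, 2, 3, 1, 4, 0], ![2, 1, 1, 2, 0, 4, 3, 1, 2, 4, 3, 4, 3, 0, 2, 4, 1, 4, 0, 2, 1, 2, 2, 0, 1, 0, 3, 4, 2, 3, 3, 4, 4, 3, 0, 2], ![3, 0, 1, 2, 3, 2, 3, 0, 2, 0, 4, 1, 0, 4, 2, 4, 1, 2, 3, 2, 1, 2, 4, 2, 1, 0, 0, 1, 2, 3, 4, 1, 2, 0, 3, 2], ![3, 2, 1, 2, 0, 0, 3, 0, 0, 0, 4, 3, 3, 4, 2, 0, 4, 3, 3, 4, 4, 2, 2, 4, 1, 1, 3, 3, 2, 2, 4, 3, 0, 3, 0, 2], ![2, 2,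 3, 1, 2, 1, 2, 2, 1, 4, 0, 3, 2, 1, 1, 0, 0, 1, 2, 1, 3, 1, 4, 1, 0, 2, 2, 3, 4, 2, 0, 3, 1, 2, 2, 1], ![0, 3, 1, 2, 0, 2, 0, 3, 2, 2, 1, 1, 3, 0, 2, 1, 4, 2, 0, 2, 1, 2, 2, 2, 4, 3, 3, 1, 4, 0, 1, 1, 2, 3, 0, 2], ![4, 0, 0, 1, 2, 1, 2, 2, 1, 3, 3, 1, 4, 4, 4, 1, 3, 3, 4, 4, 0, 4, 1, 4, 3, 4, 2, 3, 3, 2, 0, 3, 1, 2, 2, 1], ![1, 2, 1, 2, 0, 0, 3, 0, 2, 3, 2, 0, 1, 1, 4, 0, 4, 3, 3, 4, 4, 2, 2, 4, 1, 1, 3, 3, 2, 2, 4, 3, 0, 3, 0, 2], ![0, 3, 4, 2, 3, 4, 0, 3, 2, 4, 1, 4, 0, 0, 2, 4, 3, 4, 3, 2, 1, 4, 2, 2, 1, 0, 0, 4, 0, 1, 1, 4, 4, 0, 3, 2], ![4, 3, 2, 3, 1, 3, 1, 1, 3, 3, 2, 2, 4, 0, 0, 4, 2, 1, 4, 0, 2,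 0, 0, 0, 2, 4, 1, 4, 3, 1, 0, 4, 3, 1, 1, 3], ![0, 0, 2, 0, 4, 2, 1, 4, 0, 4, 1, 3, 1, 4, 1, 1, 4, 1, 3, 1, 4, 3, 3, 1, 2, 0, 1, 3, 0, 2, 1, 3, 2, 1, 4, 0], ![2, 4, 0, 4, 4, 4, 2, 2, 4, 1, 3, 0, 0, 1, 1, 0, 1, 2, 2, 3, 0, 1, 4, 1, 3, 0, 2, 2, 1, 4, 0, 0, 4, 0, 4, 1], ![0, 1, 4, 4, 3, 4, 0, 3, 4, 4, 3, 4, 0, 0, 2, 2, 3, 1, 0, 0, 4, 2, 2, 2, 1, 0, 3, 2, 2, 3, 1, 4, 4, 0, 3, 2], ![0, 3, 4, 4, 3, 4, 0, 3, 2, 4, 3, 4, 0, 0, 2, 4, 1, 4, 3, 2, 1, 2, 2, 2, 1, 0, 3, 2, 2, 3, 1, 4, 4, 0, 3, 2], ![3, 0, 1, 2, 0, 0, 3, 0, 2, 0, 4, 3, 3, 4, 2, 3, 2, 0, 0, 2, 1, 2, 2, 4, 1, 1, 3, 3, 2, 2, 4, 3, 0, 3, 0, 2], ![2, 2, 0,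 4, 2, 1, 2, 2, 1, 1, 3, 3, 2, 1, 1, 3, 3, 1, 2, 1, 3, 1, 1, 4, 3, 4, 4, 0, 1, 0, 0, 3, 1, 2, 2, 1], ![3, 0, 4, 4, 3, 2, 0, 3, 2, 2, 1, 1, 0, 2, 4, 1, 3, 2, 3, 0, 4, 2, 2, 4, 1, 0, 3, 4, 2, 3, 4, 4, 4, 2, 1, 2], ![4, 0, 0, 4, 2, 3, 2, 2, 1, 3, 0, 1, 2, 4, 4, 1, 0, 3, 2, 4, 0, 1, 1, 2, 3, 4, 4, 3, 1, 0, 2, 3, 1, 0, 4, 1], ![2, 2, 0, 1, 2, 1, 2, 2, 1, 1, 0, 3, 2, 1, 1, 3, 0, 1, 2, 1, 3, 4, 1, 4, 3, 4, 2, 3, 4, 2, 0, 3, 1, 2, 2, 1], ![1, 1, 2, 0, 4, 3, 1, 1, 3, 0, 2, 2, 1, 3, 3, 2, 2, 0, 1, 3, 4, 3, 3, 0, 2, 4, 1, 2, 0, 4, 2, 2, 0, 1, 1, 3], ![1, 4, 2, 0, 4, 0, 1, 1, 0, 0, 2, 2, 3, 3, 3, 0, 4, 2, 1, 1, 2, 3,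 3, 3, 2, 3, 1, 0, 0, 4, 0, 2, 0, 3, 4, 3], ![4, 3, 4, 1, 3, 3, 4, 1, 3, 1, 0, 4, 4, 2, 0, 1, 0, 4, 4, 2, 2, 0, 0, 3, 2, 2, 1, 1, 3, 3, 2, 4, 1, 4, 1, 0], ![2, 2, 3, 1, 4, 1, 2, 2, 1, 4, 0, 0, 2, 1, 1, 0, 0, 4, 2, 1, 3, 1, 1, 1, 0, 2, 0, 3, 4, 2, 3, 0, 4, 2, 2, 1], ![0, 3, 1, 2, 0, 2, 3, 3, 2, 2, 1, 1, 3, 2, 2, 1, 4, 2, 0, 4, 1, 2, 2, 2, 1, 3, 3, 1, 2, 0, 1, 4, 2, 1, 0, 4], ![2, 2, 0, 4, 2, 1, 2, 4, 1, 1, 3, 3, 2, 1, 4, 3, 3, 1, 2, 1, 0, 1, 1, 4, 3, 2, 4, 0, 1, 2, 0, 3, 4, 2, 4, 4], ![1, 2, 4, 4, 3, 0, 0, 0, 2, 0, 4, 3, 0, 4, 4, 3, 1, 0, 3, 2, 4, 2, 2, 1, 1, 3, 3, 1, 2, 0, 2, 3, 2, 0, 1, 0]]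

/-- Mod-p column independence of the pair-incidence structure of a block family. -/
def ModIndep {V : Type*} [DecidableEq V] {ι : Type*} [Fintype ι]
    (p : ℕ) (B : ι → Finset V) : Prop :=
  ∀ z : ι → ZMod p, (∀ q : Finset V, q.card = 2 →
    (∑ i, (if q ⊆ B i then z i else 0)) = 0) → z = 0

theorem modIndep_of_cert {k n : ℕ} (p : ℕ) (P T : Fin n → Finset (Fin k))
    (M : Fin n → Fin n → ZMod p)
    (hP : ∀ q, (P q).card = 2)
    (hM : ∀ j i, (∑ q, M j q * (if P q ⊆ T i then 1 else 0)) =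
      (if i = j then (1 : ZMod p) else 0)) :
    ModIndep p T := by
  intro z hz
  funext j
  have key : (0 : ZMod p) = z j := by
    calc (0 : ZMod p) = ∑ q, M j q * (∑ i, (if P q ⊆ T i then z i else 0)) := by
          simp only [fun q => hz (P q) (hP q), mul_zero, Finset.sum_const_zero]
      _ = ∑ q, ∑ i, M j q * (if P q ⊆ T i then z i else 0) := by
          simp only [Finset.mul_sum]
      _ = ∑ i, ∑ q, M j q * (if P q ⊆ T i then z i else 0) := Finset.sum_comm
      _ = ∑ i, (∑ q, M j q * (if P q ⊆ T i then 1 else 0)) * z i := by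
          refine Finset.sum_congr rfl fun i _ => ?_
          rw [Finset.sum_mul]
          refine Finset.sum_congr rfl fun q _ => ?_
          by_cases h : P q ⊆ T i <;> simp [h, mul_assoc]
      _ = ∑ i, (if i = j then (1 : ZMod p) else 0) * z i := by
          simp only [hM]
      _ = z j := by
          rw [Finset.sum_eq_single j] <;> simp +contextual
  simpa using key.symm

theorem modIndep_map {p k n : ℕ} {V : Type*} [DecidableEq V]
    (T : Fin n → Finset (Fin k)) (h : ModIndep p T) (f : Fin k ↪ V) :
    ModIndep p (fun i => (T i).map f) := by
  intro z hz
  apply h z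
  intro q hq
  have := hz (q.map f) (by simpa using hq)
  simpa only [Finset.map_subset_map] using this

theorem tradeFree_of_modIndep {V : Type*} [DecidableEq V] {ι : Type*} [Fintype ι]
    [DecidableEq ι] {p : ℕ} [Fact (1 < p)] (B : ι → Finset V)
    (hinj : Function.Injective B) (h : ModIndep p B) : TradeFree B := by
  intro A1 A2 h1 h2 hc
  have nodupM : (Multiset.map B Finset.univ.val).Nodup :=
    Finset.univ.nodup.map hinj
  have key : ∀ C : Multiset (Finset V), C ≤ Multiset.map B Finset.univ.val →
      C = Multiset.map B (Finset.univ.filter (fun i => B i ∈ C)).val := by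
    intro C hC
    have hnd : C.Nodup := Multiset.nodup_of_le hC nodupM
    have hnd2 : (Multiset.map B (Finset.univ.filter (fun i => B i ∈ C)).val).Nodup :=
      (Finset.univ.filter (fun i => B i ∈ C)).nodup.map hinj
    refine (Multiset.Nodup.ext hnd hnd2).mpr fun e => ⟨fun heC => ?_, fun he => ?_⟩
    · have heM : e ∈ Multiset.map B Finset.univ.val := Multiset.mem_of_le hC heC
      obtain ⟨i, _, rfl⟩ := Multiset.mem_map.mp heM
      exact Multiset.mem_map.mpr ⟨i, by simp [heC], rfl⟩
    · obtain ⟨i, hi, rfl⟩ := Multiset.mem_map.mp he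
      have : i ∈ Finset.univ.filter (fun i => B i ∈ C) := hi
      exact (Finset.mem_filter.mp this).2
  set s1 := Finset.univ.filter (fun i => B i ∈ A1) with hs1
  set s2 := Finset.univ.filter (fun i => B i ∈ A2) with hs2
  have e1 : A1 = Multiset.map B s1.val := key A1 h1
  have e2 : A2 = Multiset.map B s2.val := key A2 h2
  have cnt : ∀ (s : Finset ι) (q : Finset V),
      Multiset.countP (fun e => q ⊆ e) (Multiset.map B s.val) =
        (s.filter (fun i => q ⊆ B i)).card := by
    intro s q
    rw [Multiset.countP_map]
    rfl
  have csum : ∀ (s : Finset ι) (q : Finset V),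
      (∑ i, (if q ⊆ B i then (if i ∈ s then (1 : ZMod p) else 0) else 0)) =
        ((s.filter (fun i => q ⊆ B i)).card : ZMod p) := by
    intro s q
    have hrw : ∀ i, (if q ⊆ B i then (if i ∈ s then (1 : ZMod p) else 0) else 0) =
        (if i ∈ s.filter (fun i => q ⊆ B i) then 1 else 0) := by
      intro i
      by_cases hi : i ∈ s <;> by_cases hq : q ⊆ B i <;> simp [hi, hq]
    simp only [hrw]
    rw [Finset.sum_boole]
    congr 1
    rw [Finset.filter_mem_eq_inter, Finset.univ_inter]
  have hzero : (fun i => (if i ∈ s1 then (1 : ZMod p) else 0)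
      - (if i ∈ s2 then 1 else 0)) = 0 := by
    apply h
    intro q hq
    have hcq := hc q hq
    rw [e1, e2, cnt, cnt] at hcq
    have : ∀ i, (if q ⊆ B i then ((if i ∈ s1 then (1 : ZMod p) else 0)
        - (if i ∈ s2 then 1 else 0)) else 0) =
        (if q ⊆ B i then (if i ∈ s1 then (1 : ZMod p) else 0) else 0)
        - (if q ⊆ B i then (if i ∈ s2 then (1 : ZMod p) else 0) else 0) := by
      intro i; by_cases hq' : q ⊆ B i <;> simp [hq']
    simp only [this]
    rw [Finset.sum_sub_distrib, csum, csum, hcq, sub_self]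
  have hs : s1 = s2 := by
    ext i
    have hzi := congrFun hzero i
    simp only [Pi.zero_apply, sub_eq_zero] at hzi
    by_cases h1i : i ∈ s1 <;> by_cases h2i : i ∈ s2
    · simp [h1i, h2i]
    · exfalso; rw [if_pos h1i, if_neg h2i] at hzi; exact one_ne_zero hzi
    · exfalso; rw [if_neg h1i, if_pos h2i] at hzi; exact one_ne_zero hzi.symm
    · simp [h1i, h2i]
  rw [e1, e2, hs]

section LocalSys

variable {v k n : ℕ}

/-- The triples of the local system `T` transplanted onto a `k`-subset `G` of `Fin v`. -/
def blocksOf (T : Fin n → Finset (Fin k)) (G : Finset (Fin v)) (h : G.card = k) :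
    Fin n → Finset (Fin v) :=
  fun t => (T t).map (G.orderEmbOfFin h).toEmbedding

/-- The multiset of transplanted triples. -/
def mkLoc (T : Fin n → Finset (Fin k)) (G : Finset (Fin v)) (h : G.card = k) :
    Multiset (Finset (Fin v)) :=
  Multiset.map (blocksOf T G h) Finset.univ.val

theorem univ_map_orderEmbOfFin (G : Finset (Fin v)) (h : G.card = k) :
    (Finset.univ : Finset (Fin k)).map (G.orderEmbOfFin h).toEmbedding = G := by
  apply Finset.eq_of_subset_of_card_le
  · intro x hx
    obtain ⟨i, _, rfl⟩ := Finset.mem_map.mp hx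
    exact G.orderEmbOfFin_mem h i
  · rw [Finset.card_map, Finset.card_univ, Fintype.card_fin, h]

theorem mkLoc_subset {T : Fin n → Finset (Fin k)} {G : Finset (Fin v)} {h : G.card = k}
    {e : Finset (Fin v)} (he : e ∈ mkLoc T G h) : e ⊆ G := by
  obtain ⟨t, _, rfl⟩ := Multiset.mem_map.mp he
  intro x hx
  obtain ⟨y, _, rfl⟩ := Finset.mem_map.mp hx
  exact G.orderEmbOfFin_mem h y

theorem mkLoc_card {T : Fin n → Finset (Fin k)} (hT3 : ∀ t, (T t).card = 3)
    {G : Finset (Fin v)} {h : G.card = k} {e : Finset (Fin v)} (he : e ∈ mkLoc T G h) :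
    e.card = 3 := by
  obtain ⟨t, _, rfl⟩ := Multiset.mem_map.mp he
  rw [blocksOf, Finset.card_map]
  exact hT3 t

theorem mkLoc_nodup {T : Fin n → Finset (Fin k)} (hTinj : ∀ a b, T a = T b → a = b)
    {G : Finset (Fin v)} {h : G.card = k} : (mkLoc T G h).Nodup := by
  refine Finset.univ.nodup.map fun a b hab => hTinj a b ?_
  exact Finset.map_injective _ hab

theorem mkLoc_countP {T : Fin n → Finset (Fin k)}
    (hTcov : ∀ q : Finset (Fin k), q.card = 2 →
      (Finset.univ.filter (fun t => q ⊆ T t)).card = 3)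
    {G : Finset (Fin v)} {h : G.card = k} {q : Finset (Fin v)}
    (hq : q.card = 2) (hqG : q ⊆ G) :
    (mkLoc T G h).countP (fun e => q ⊆ e) = 3 := by
  have hq' : q ⊆ (Finset.univ : Finset (Fin k)).map (G.orderEmbOfFin h).toEmbedding := by
    rw [univ_map_orderEmbOfFin]; exact hqG
  obtain ⟨q', _, rfl⟩ := Finset.subset_map_iff.mp hq'
  rw [mkLoc, Multiset.countP_map]
  have hpred : ∀ t : Fin n,
      (q'.map (G.orderEmbOfFin h).toEmbedding ⊆ blocksOf T G h t) = (q' ⊆ T t) := by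
    intro t
    exact propext Finset.map_subset_map
  have := hTcov q' (by rwa [Finset.card_map] at hq)
  rw [Finset.card_filter] at this
  simp only [hpred]
  simp [Finset.sum_boole, Multiset.countP_eq_card_filter] at this ⊢
  exact this

theorem mkLoc_countP_zero {T : Fin n → Finset (Fin k)}
    {G : Finset (Fin v)} {h : G.card = k} {q : Finset (Fin v)} (hnq : ¬ q ⊆ G) :
    (mkLoc T G h).countP (fun e => q ⊆ e) = 0 :=
  Multiset.countP_eq_zero.mpr fun e he hqe => hnq (hqe.trans (mkLoc_subset he))

theorem mkLoc_tradeFree {T : Fin n → Finset (Fin k)}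
    (hTinj : ∀ a b, T a = T b → a = b) (hTmi : ModIndep 5 T)
    {G : Finset (Fin v)} {h : G.card = k} :
    ∀ D1 D2 : Multiset (Finset (Fin v)), D1 ≤ mkLoc T G h → D2 ≤ mkLoc T G h →
      (∀ q : Finset (Fin v), q.card = 2 →
        D1.countP (fun e => q ⊆ e) = D2.countP (fun e => q ⊆ e)) → D1 = D2 := by
  haveI : Fact (1 < 5) := ⟨by norm_num⟩
  have hbinj : Function.Injective (blocksOf T G h) := fun a b hab =>
    hTinj a b (Finset.map_injective _ hab)
  have htf : TradeFree (blocksOf T G h) :=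
    tradeFree_of_modIndep (p := 5) _ hbinj (modIndep_map T hTmi _)
  exact fun D1 D2 h1 h2 hc => htf D1 D2 h1 h2 hc

end LocalSys

/-- Bundle of facts about a trade-free `TS_3(k)` on `Fin k`. -/
structure LocalGood (k : ℕ) where
  n : ℕ
  T : Fin n → Finset (Fin k)
  h3 : ∀ t, (T t).card = 3
  cov : ∀ q : Finset (Fin k), q.card = 2 → (Finset.univ.filter (fun t => q ⊆ T t)).card = 3
  inj : ∀ a b, T a = T b → a = b
  mi : ModIndep 5 T

/-- The properties we need of the multiset of triples placed on a block `G`. -/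
def LProps {v : ℕ} (G : Finset (Fin v)) (M : Multiset (Finset (Fin v))) : Prop :=
  (∀ e ∈ M, e ⊆ G ∧ e.card = 3) ∧ M.Nodup ∧
  (∀ q : Finset (Fin v), q.card = 2 → q ⊆ G → M.countP (fun e => q ⊆ e) = 3) ∧
  (∀ q : Finset (Fin v), ¬ q ⊆ G → M.countP (fun e => q ⊆ e) = 0) ∧
  (∀ D1 D2 : Multiset (Finset (Fin v)), D1 ≤ M → D2 ≤ M →
    (∀ q : Finset (Fin v), q.card = 2 →
      D1.countP (fun e => q ⊆ e) = D2.countP (fun e => q ⊆ e)) → D1 = D2)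

theorem mkLoc_props {v k : ℕ} (g : LocalGood k) (G : Finset (Fin v)) (h : G.card = k) :
    LProps G (mkLoc g.T G h) :=
  ⟨fun _ he => ⟨mkLoc_subset he, mkLoc_card g.h3 he⟩, mkLoc_nodup g.inj,
    fun _ hq hqG => mkLoc_countP g.cov hq hqG,
    fun _ hnq => mkLoc_countP_zero hnq,
    mkLoc_tradeFree g.inj g.mi⟩

/-- Triples placed on a block, by cases on its size. -/
def glueL (g5 : LocalGood 5) (g7 : LocalGood 7) (g9 : LocalGood 9) {v : ℕ}
    (G : Finset (Fin v)) : Multiset (Finset (Fin v)) :=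
  if h5 : G.card = 5 then mkLoc g5.T G h5
  else if h7 : G.card = 7 then mkLoc g7.T G h7
  else if h9 : G.card = 9 then mkLoc g9.T G h9
  else 0

theorem glueL_props (g5 : LocalGood 5) (g7 : LocalGood 7) (g9 : LocalGood 9) {v : ℕ}
    (G : Finset (Fin v)) (hG : G.card = 5 ∨ G.card = 7 ∨ G.card = 9) :
    LProps G (glueL g5 g7 g9 G) := by
  rcases hG with h | h | h
  · rw [glueL, dif_pos h]; exact mkLoc_props g5 G h
  · rw [glueL, dif_neg (by omega), dif_pos h]; exact mkLoc_props g7 G h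
  · rw [glueL, dif_neg (by omega), dif_neg (by omega), dif_pos h]; exact mkLoc_props g9 G h

theorem countP_multiset_sum {α β : Type*} (s : Finset β) (f : β → Multiset α)
    (p : α → Prop) [DecidablePred p] :
    (∑ i ∈ s, f i).countP p = ∑ i ∈ s, (f i).countP p := by
  classical
  induction s using Finset.cons_induction with
  | empty => simp
  | cons a s ha ih => rw [Finset.sum_cons, Finset.sum_cons, Multiset.countP_add, ih]

theorem glue {v : ℕ} (g5 : LocalGood 5) (g7 : LocalGood 7) (g9 : LocalGood 9)
    (N : ℕ) (A : Fin N → Finset (Fin v)) (hA : IsPBD A 1 {5, 7, 9}) :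
    ∃ (n : ℕ) (B : Fin n → Finset (Fin v)),
      IsPBD B 3 {3} ∧ TradeFree B ∧ Function.Injective B := by
  classical
  set L : Fin N → Multiset (Finset (Fin v)) := fun i => glueL g5 g7 g9 (A i) with hLdef
  have hLP : ∀ i, LProps (A i) (L i) := by
    intro i
    have := hA.1 i
    simp only [Set.mem_insert_iff, Set.mem_singleton_iff] at this
    exact glueL_props g5 g7 g9 (A i) this
  set S : Multiset (Finset (Fin v)) := ∑ i, L i with hSdef
  -- unique block containing a pair
  have hUniq : ∀ q : Finset (Fin v), q.card = 2 → ∀ i i', q ⊆ A i → q ⊆ A i' → i = i' := by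
    intro q hq i i' hi hi'
    have h1 := hA.2 q hq
    have := Finset.card_le_one.mp (le_of_eq h1)
    exact this i (by simp [hi]) i' (by simp [hi'])
  -- a triple of the system lies in a unique block
  have hTriUniq : ∀ e : Finset (Fin v), ∀ i i', e ∈ L i → e ∈ L i' → i = i' := by
    intro e i i' hi hi'
    obtain ⟨hsub, hcard⟩ := (hLP i).1 e hi
    obtain ⟨hsub', _⟩ := (hLP i').1 e hi'
    obtain ⟨q, hqe, hq2⟩ := Finset.exists_subset_card_eq (s := e) (n := 2) (by omega)
    exact hUniq q hq2 i i' (hqe.trans hsub) (hqe.trans hsub')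
  have hmemS : ∀ {e : Finset (Fin v)}, e ∈ S → ∃ i, e ∈ L i := by
    intro e he
    rw [hSdef] at he
    obtain ⟨i, _, hi⟩ := Multiset.mem_sum.mp he
    exact ⟨i, hi⟩
  -- S has no duplicates
  have hnodup : S.Nodup := by
    rw [Multiset.nodup_iff_count_le_one]
    intro e
    rw [hSdef, Multiset.count_sum']
    have hz : ∀ i ∈ (Finset.univ : Finset (Fin N)), (L i).count e ≠ 0 → e ∈ L i := by
      intro i _ hne
      exact Multiset.count_pos.mp (Nat.pos_of_ne_zero hne)
    rw [← Finset.sum_filter_of_ne hz]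
    have hcard1 : (Finset.univ.filter (fun i => e ∈ L i)).card ≤ 1 := by
      apply Finset.card_le_one.mpr
      intro a ha b hb
      exact hTriUniq e a b (Finset.mem_filter.mp ha).2 (Finset.mem_filter.mp hb).2
    calc ∑ i ∈ Finset.univ.filter (fun i => e ∈ L i), (L i).count e
        ≤ (Finset.univ.filter (fun i => e ∈ L i)).card • 1 :=
          Finset.sum_le_card_nsmul _ _ 1 fun i _ =>
            Multiset.nodup_iff_count_le_one.mp (hLP i).2.1 e
      _ ≤ 1 := by simpa using hcard1
  -- pair counts of S
  have hcount : ∀ q : Finset (Fin v), q.card = 2 → S.countP (fun e => q ⊆ e) = 3 := by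
    intro q hq
    rw [hSdef, countP_multiset_sum]
    obtain ⟨i0, hi0⟩ := Finset.card_eq_one.mp (hA.2 q hq)
    have hqi0 : q ⊆ A i0 := by
      have : i0 ∈ Finset.univ.filter (fun i => q ⊆ A i) := hi0 ▸ Finset.mem_singleton_self i0
      exact (Finset.mem_filter.mp this).2
    rw [Finset.sum_eq_single i0]
    · exact (hLP i0).2.2.1 q hq hqi0
    · intro b _ hb
      apply (hLP b).2.2.2.1 q
      intro hqb
      exact hb (hUniq q hq b i0 hqb hqi0)
    · intro h; exact absurd (Finset.mem_univ i0) h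
  -- the blocks as a Finset and an indexed family
  set F : Finset (Finset (Fin v)) := ⟨S, hnodup⟩ with hFdef
  have hmemF : ∀ e, e ∈ F ↔ e ∈ S := fun e => Iff.rfl
  set eqv : F ≃ Fin F.card := F.equivFin with heqv
  refine ⟨F.card, fun j => ((eqv.symm j : F) : Finset (Fin v)), ?_, ?_, ?_⟩
  case refine_3 =>
    intro a b hab
    exact eqv.symm.injective (Subtype.ext hab)
  all_goals {
    have hmapB : Multiset.map (fun j => ((eqv.symm j : F) : Finset (Fin v)))
        Finset.univ.val = S := by
      have h2 : Multiset.map eqv.symm Finset.univ.val = (Finset.univ : Finset F).val := by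
        have h4 := congrArg Finset.val (Finset.map_univ_equiv eqv.symm)
        rw [Finset.map_val] at h4
        simpa using h4
      calc Multiset.map (fun j => ((eqv.symm j : F) : Finset (Fin v))) Finset.univ.val
          = Multiset.map Subtype.val (Multiset.map eqv.symm Finset.univ.val) := by
            rw [Multiset.map_map]; rfl
        _ = Multiset.map Subtype.val (Finset.univ : Finset F).val := by rw [h2]
        _ = S := by
            rw [Finset.univ_eq_attach, Finset.attach_val, Multiset.attach_map_val]
    first
    | -- IsPBD B 3 {3}
      constructor
      · intro j
        have hjS : ((eqv.symm j : F) : Finset (Fin v)) ∈ S := (eqv.symm j).2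
        obtain ⟨i, hi⟩ := hmemS hjS
        have := ((hLP i).1 _ hi).2
        simp [this]
      · intro q hq
        have : (Finset.univ.filter
            (fun j => q ⊆ ((eqv.symm j : F) : Finset (Fin v)))).card =
            S.countP (fun e => q ⊆ e) := by
          rw [← hmapB, Multiset.countP_map]
          rfl
        rw [this, hcount q hq]
    | -- TradeFree
      intro A1 A2 h1 h2 hc
      rw [hmapB] at h1 h2
      have helper : ∀ C1 C2 : Multiset (Finset (Fin v)), C1 ≤ S → C2 ≤ S →
          (∀ q : Finset (Fin v), q.card = 2 →
            C1.countP (fun e => q ⊆ e) = C2.countP (fun e => q ⊆ e)) →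
          ∀ e, e ∈ C1 → C1.count e = C2.count e := by
        intro C1 C2 hC1 hC2 hcc e heC1
        obtain ⟨i0, hei0⟩ := hmemS (Multiset.mem_of_le hC1 heC1)
        have heG : e ⊆ A i0 := ((hLP i0).1 e hei0).1
        -- any triple of the system meeting a pair of `A i0` lies inside `A i0`
        have hkey : ∀ e' ∈ S, ∀ q : Finset (Fin v), q.card = 2 → q ⊆ A i0 → q ⊆ e' →
            e' ⊆ A i0 := by
          intro e' he' q hq hqA hqe'
          obtain ⟨i', hi'⟩ := hmemS he'
          have : i' = i0 := hUniq q hq i' i0 (hqe'.trans ((hLP i').1 e' hi').1) hqA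
          exact this ▸ ((hLP i').1 e' hi').1
        -- count of S at any e' inside A i0 equals count of L i0
        have hScnt : ∀ e' : Finset (Fin v), e' ∈ L i0 ∨ e' ∉ S →
            S.count e' ≤ (L i0).count e' := by
          intro e' he'
          rcases he' with he' | he'
          · rw [hSdef, Multiset.count_sum']
            rw [Finset.sum_eq_single i0]
            · intro b _ hb
              rw [Multiset.count_eq_zero]
              intro hmem
              exact hb (hTriUniq e' b i0 hmem he')
            · intro h; exact absurd (Finset.mem_univ i0) h
          · rw [Multiset.count_eq_zero.mpr he']
            exact Nat.zero_le _
        have hfil : ∀ C : Multiset (Finset (Fin v)), C ≤ S →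
            C.filter (fun e' => e' ⊆ A i0) ≤ L i0 := by
          intro C hC
          rw [Multiset.le_iff_count]
          intro e'
          rw [Multiset.count_filter]
          split_ifs with hsub
          · by_cases heS : e' ∈ S
            · obtain ⟨i', hi'⟩ := hmemS heS
              have hcard3 := ((hLP i').1 e' hi').2
              obtain ⟨q, hqe, hq2⟩ := Finset.exists_subset_card_eq (s := e') (n := 2) (by omega)
              have : i' = i0 :=
                hUniq q hq2 i' i0 (hqe.trans ((hLP i').1 e' hi').1) (hqe.trans hsub)
              exact le_trans (Multiset.count_le_of_le e' hC)
                (hScnt e' (Or.inl (this ▸ hi')))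
            · rw [Multiset.count_eq_zero.mpr fun hmem =>
                heS (Multiset.mem_of_le hC hmem)]
              exact Nat.zero_le _
          · exact Nat.zero_le _
        -- the two restrictions form a local trade
        have hcnteq : ∀ q : Finset (Fin v), q.card = 2 →
            (C1.filter (fun e' => e' ⊆ A i0)).countP (fun e => q ⊆ e) =
            (C2.filter (fun e' => e' ⊆ A i0)).countP (fun e => q ⊆ e) := by
          intro q hq
          by_cases hqA : q ⊆ A i0
          · have hre : ∀ C : Multiset (Finset (Fin v)), C ≤ S →
                (C.filter (fun e' => e' ⊆ A i0)).countP (fun e => q ⊆ e) =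
                C.countP (fun e => q ⊆ e) := by
              intro C hC
              rw [Multiset.countP_filter]
              apply Multiset.countP_congr rfl
              intro e' he'
              have heS' : e' ∈ S := Multiset.mem_of_le hC he'
              exact propext ⟨fun hh => hh.1, fun hh => ⟨hh, hkey e' heS' q hq hqA hh⟩⟩
            rw [hre C1 hC1, hre C2 hC2, hcc q hq]
          · have hz : ∀ C : Multiset (Finset (Fin v)),
                (C.filter (fun e' => e' ⊆ A i0)).countP (fun e => q ⊆ e) = 0 := by
              intro C
              rw [Multiset.countP_eq_zero]
              intro e' he' hqe'
              exact hqA (hqe'.trans (Multiset.mem_filter.mp he').2)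
            rw [hz, hz]
        have hDeq := (hLP i0).2.2.2.2 _ _ (hfil C1 hC1) (hfil C2 hC2) hcnteq
        have hcnt1 : C1.count e = (C1.filter (fun e' => e' ⊆ A i0)).count e := by
          rw [Multiset.count_filter, if_pos heG]
        have hcnt2 : C2.count e = (C2.filter (fun e' => e' ⊆ A i0)).count e := by
          rw [Multiset.count_filter, if_pos heG]
        rw [hcnt1, hcnt2, hDeq]
      rw [Multiset.ext]
      intro e
      by_cases he1 : e ∈ A1
      · exact helper A1 A2 h1 h2 hc e he1
      · by_cases he2 : e ∈ A2
        · exact (helper A2 A1 h2 h1 (fun q hq => (hc q hq).symm) e he2).symm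
        · rw [Multiset.count_eq_zero.mpr he1, Multiset.count_eq_zero.mpr he2]
  }

def good5 : LocalGood 5 where
  n := 10
  T := T5
  h3 := by decide
  cov := by decide
  inj := by decide
  mi := modIndep_of_cert 5 P5 T5 M5 (by decide) (by decide)

def good7 : LocalGood 7 where
  n := 21
  T := T7
  h3 := by decide
  cov := by decide
  inj := by decide
  mi := modIndep_of_cert 5 P7 T7 M7 (by decide) (by decide)

def good9 : LocalGood 9 where
  n := 36
  T := T9
  h3 := by decide
  cov := by decide
  inj := by decide
  mi := modIndep_of_cert 5 P9 T9 M9 (by decide) (by decide)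

/-- If `v ≥ 5` is odd and a `PBD(v, {5,7,9})` (index 1) exists, then there exists a
trade-free threefold triple system `TS_3(v)`; in particular one with no repeated
blocks. -/
theorem tradeFree_ts3_of_pbd579 (v : ℕ) (hv : 5 ≤ v) (hodd : Odd v)
    (hPBD : ∃ (n : ℕ) (A : Fin n → Finset (Fin v)), IsPBD A 1 {5, 7, 9}) :
    ∃ (n : ℕ) (B : Fin n → Finset (Fin v)),
      IsPBD B 3 {3} ∧ TradeFree B ∧ Function.Injective B := by
  obtain ⟨N, A, hA⟩ := hPBD
  exact glue good5 good7 good9 N A hA
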